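/- Let A = (a_{i,j}) be an M × N upper triangular NSC matrix over F_q (so a_{i,j} = 0 for i > j), and C = [C_1,…,C_M]·A. Then d_b(C) ≤ min{ N·d_b(C_1), (N − i + 1)·d_b(C_i) + b − 1 for i = 2,…,M }. -/

import Mathlib

open scoped Classical
open Finset

noncomputable def bwt {F : Type*} [Field F] (n b : ℕ) [NeZero n] (x : ZMod n → F) : ℕ :=
  (Finset.univ.filter (fun i : ZMod n => ∃ j < b, x (i + (j : ZMod n)) ≠ 0)).card

noncomputable def bDist {F : Type*} [Field F] (n b : ℕ) [NeZero n]
    (C : Set (ZMod n → F)) : ℕ :=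
  sInf {w | ∃ u ∈ C, ∃ v ∈ C, u ≠ v ∧ bwt n b (u - v) = w}

def IsHole {n : ℕ} [NeZero n] (J H : Finset (ZMod n)) : Prop :=
  ∃ (a : ZMod n) (h : ℕ), 0 < h ∧
    H = Finset.image (fun t : ℕ => a + (t : ZMod n) + 1) (Finset.range h) ∧
    (∀ x ∈ H, x ∉ J) ∧ a ∈ J ∧ a + (h : ZMod n) + 1 ∈ J

noncomputable def hSupp {F : Type*} [Field F] {n : ℕ} [NeZero n] (x : ZMod n → F) :
    Finset (ZMod n) :=
  Finset.univ.filter (fun i => x i ≠ 0)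
instance neZeroMul {a b : ℕ} [NeZero a] [NeZero b] : NeZero (a * b) :=
  ⟨Nat.mul_ne_zero (NeZero.ne a) (NeZero.ne b)⟩

noncomputable def mpVec {F : Type*} [Field F] (n N M : ℕ) [NeZero n] [NeZero N]
    (A : Matrix (Fin M) (Fin N) F) (c : Fin M → ZMod n → F) : ZMod (n * N) → F :=
  fun k => ∑ ℓ : Fin M, c ℓ ((k.val % n : ℕ) : ZMod n) *
    A ℓ ⟨k.val / n, Nat.div_lt_of_lt_mul (ZMod.val_lt k)⟩

def mpCode {F : Type*} [Field F] (n N M : ℕ) [NeZero n] [NeZero N]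
    (A : Matrix (Fin M) (Fin N) F) (C : Fin M → Set (ZMod n → F)) :
    Set (ZMod (n * N) → F) :=
  {v | ∃ c : Fin M → ZMod n → F, (∀ ℓ, c ℓ ∈ C ℓ) ∧ v = mpVec n N M A c}

noncomputable def minHamming {F : Type*} [Field F] {N : ℕ} (S : Set (Fin N → F)) : ℕ :=
  sInf {w | ∃ v ∈ S, v ≠ 0 ∧ hammingNorm v = w}

def NSC {F : Type*} [Field F] {M N : ℕ} (A : Matrix (Fin M) (Fin N) F) : Prop :=
  ∀ t : ℕ, 0 < t → ∀ htM : t ≤ M, ∀ g : Fin t → Fin N, StrictMono g →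
    (Matrix.of (fun r c : Fin t => A (Fin.castLE htM r) (g c))).det ≠ 0

lemma castModDvd (n : ℕ) (a m : ℕ) (h : n ∣ m) : ((a % m : ℕ) : ZMod n) = (a : ZMod n) := by
  obtain ⟨c, rfl⟩ := h
  conv_rhs => rw [← Nat.mod_add_div a (n * c)]
  push_cast
  simp [mul_assoc]

lemma key {F : Type*} [Field F] {n N b : ℕ} [NeZero n] [NeZero N]
    (hb1 : 1 ≤ b) (hbn : b ≤ n) (s : ℕ) (hsN : s < N)
    (w : ZMod n → F) [NeZero (n * N)] (x : ZMod (n * N) → F)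
    (hx : ∀ k : ZMod (n * N), x k ≠ 0 → w ((k.val : ℕ) : ZMod n) ≠ 0 ∧ s * n ≤ k.val) :
    bwt (n * N) b x ≤ (N - s) * bwt n b w + min (b - 1) (s * n) := by
  have hn : 0 < n := Nat.pos_of_ne_zero (NeZero.ne n)
  have hN : 0 < N := Nat.pos_of_ne_zero (NeZero.ne N)
  have hnm : n ≤ n * N := Nat.le_mul_of_pos_right n hN
  set f : ZMod (n * N) → ZMod n := fun i => ((i.val : ℕ) : ZMod n) with hf
  set Sx := Finset.univ.filter
    (fun i : ZMod (n * N) => ∃ j < b, x (i + (j : ZMod (n * N))) ≠ 0) with hSx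
  set Sw := Finset.univ.filter (fun i : ZMod n => ∃ j < b, w (i + (j : ZMod n)) ≠ 0) with hSw
  have hbwx : bwt (n * N) b x = Sx.card := rfl
  have hbww : bwt n b w = Sw.card := rfl
  have hshift : ∀ (i : ZMod (n * N)) (j : ℕ),
      (((i + (j : ZMod (n * N))).val : ℕ) : ZMod n) = f i + (j : ZMod n) := by
    intro i j
    rw [ZMod.val_add, ZMod.val_natCast, castModDvd n _ (n * N) ⟨N, rfl⟩]
    push_cast
    rw [castModDvd n j (n * N) ⟨N, rfl⟩]
  have hmem : ∀ i ∈ Sx, f i ∈ Sw := by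
    intro i hi
    simp only [hSx, hSw, mem_filter, mem_univ, true_and] at hi ⊢
    obtain ⟨j, hj, hne⟩ := hi
    exact ⟨j, hj, by rw [← hshift]; exact (hx _ hne).1⟩
  have hsplit := Finset.card_filter_add_card_filter_not
    (s := Sx) (p := fun i => s * n ≤ i.val)
  set Shi := Sx.filter (fun i => s * n ≤ i.val) with hShi
  set Slo := Sx.filter (fun i => ¬ s * n ≤ i.val) with hSlo
  have hhi : Shi.card ≤ (N - s) * Sw.card := by
    apply Finset.card_le_mul_card_image_of_maps_to
      (fun i hi => hmem i (Finset.mem_of_mem_filter i hi))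
    intro a _
    have h1 : (Shi.filter (fun i => f i = a)).card ≤ (Finset.Ico s N).card := by
      apply Finset.card_le_card_of_injOn (fun i => i.val / n)
      · intro i hi
        simp only [hShi, Finset.mem_coe, mem_filter] at hi
        obtain ⟨⟨_, hsle⟩, _⟩ := hi
        rw [Finset.mem_coe, Finset.mem_Ico]
        exact ⟨(Nat.le_div_iff_mul_le hn).2 hsle, Nat.div_lt_of_lt_mul (ZMod.val_lt i)⟩
      · intro i1 h1 i2 h2 hdiv
        simp only [Finset.coe_filter, Set.mem_setOf_eq] at h1 h2
        have hmod : i1.val % n = i2.val % n := by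
          have := h1.2.trans h2.2.symm
          simpa only [hf, ZMod.val_natCast] using congrArg ZMod.val this
        apply ZMod.val_injective
        have e1 := Nat.div_add_mod i1.val n
        have e2 := Nat.div_add_mod i2.val n
        simp only at hdiv
        rw [← e1, ← e2, hdiv, hmod]
    rwa [Nat.card_Ico] at h1
  have hlo : Slo.card ≤ min (b - 1) (s * n) := by
    have h1 : Slo.card ≤ (Finset.Ico (s * n - (b - 1)) (s * n)).card := by
      apply Finset.card_le_card_of_injOn (fun i => i.val)
      · intro i hi
        simp only [hSlo, hSx, Finset.mem_coe, mem_filter, mem_univ, true_and] at hi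
        obtain ⟨⟨j, hj, hne⟩, hlt⟩ := hi
        push_neg at hlt
        have hks := (hx _ hne).2
        have hjm : j < n * N := lt_of_lt_of_le (lt_of_lt_of_le hj hbn) hnm
        have hv : (i + (j : ZMod (n * N))).val = (i.val + j) % (n * N) := by
          rw [ZMod.val_add, ZMod.val_natCast, Nat.mod_eq_of_lt hjm]
        rw [hv] at hks
        have hivlt : i.val < n * N := ZMod.val_lt i
        have hs1 : 0 < s := by
          rcases Nat.eq_zero_or_pos s with h | h
          · subst h; rw [Nat.zero_mul] at hlt; exact absurd hlt (Nat.not_lt_zero _)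
          · exact h
        have hns : n ≤ s * n := Nat.le_mul_of_pos_left n hs1
        rw [Finset.mem_coe, Finset.mem_Ico]; beta_reduce
        rcases lt_or_ge (i.val + j) (n * N) with hcase | hcase
        · rw [Nat.mod_eq_of_lt hcase] at hks; omega
        · rw [Nat.mod_eq_sub_mod hcase, Nat.mod_eq_of_lt (by omega)] at hks
          omega
      · intro i1 _ i2 _ h
        exact ZMod.val_injective _ h
    rw [Nat.card_Ico] at h1
    omega
  calc bwt (n * N) b x = Shi.card + Slo.card := by rw [hbwx, hsplit]
    _ ≤ (N - s) * bwt n b w + min (b - 1) (s * n) := by rw [hbww]; exact Nat.add_le_add hhi hlo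

lemma main_aux {F : Type*} [Field F] {n N M b : ℕ} [NeZero n] [NeZero N] [NeZero M]
    (hMN : M ≤ N) (hb1 : 1 ≤ b) (hbn : b ≤ n)
    (A : Matrix (Fin M) (Fin N) F) (hA : NSC A)
    (htri : ∀ (i : Fin M) (j : Fin N), j.val < i.val → A i j = 0)
    (C : Fin M → Set (ZMod n → F)) (hC : ∀ ℓ, ∃ u ∈ C ℓ, ∃ v ∈ C ℓ, u ≠ v)
    (idx : Fin M) :
    bDist (n * N) b (mpCode n N M A C) ≤
      (N - idx.val) * bDist n b (C idx) + min (b - 1) (idx.val * n) := by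
  have hn : 0 < n := Nat.pos_of_ne_zero (NeZero.ne n)
  set s := idx.val with hs
  have hsN : s < N := lt_of_lt_of_le idx.isLt hMN
  have hjdxlt : s < N := hsN
  set jdx : Fin N := ⟨s, hjdxlt⟩ with hjdx
  -- the diagonal entry is nonzero
  have hAne : A idx jdx ≠ 0 := by
    intro h
    have htM : s + 1 ≤ M := idx.isLt
    apply hA (s + 1) (Nat.succ_pos s) htM (Fin.castLE (le_trans htM hMN))
      (Fin.strictMono_castLE _)
    apply Matrix.det_eq_zero_of_row_eq_zero (⟨s, lt_add_one s⟩ : Fin (s + 1))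
    intro j
    have hcast : Fin.castLE htM (⟨s, lt_add_one s⟩ : Fin (s + 1)) = idx := Fin.ext rfl
    simp only [Matrix.of_apply, hcast]
    rcases Nat.lt_succ_iff_lt_or_eq.1 j.isLt with hj | hj
    · exact htri idx _ hj
    · have : Fin.castLE (le_trans htM hMN) j = jdx := Fin.ext hj
      rw [this]; exact h
  -- minimal pair in C idx
  have hne : {w | ∃ u ∈ C idx, ∃ v ∈ C idx, u ≠ v ∧ bwt n b (u - v) = w}.Nonempty := by
    obtain ⟨u, hu, v, hv, huv⟩ := hC idx
    exact ⟨_, u, hu, v, hv, huv, rfl⟩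
  obtain ⟨u, hu, v, hv, huv, hwd⟩ := Nat.sInf_mem hne
  -- base components
  have hCne : ∀ ℓ, ∃ z, z ∈ C ℓ := fun ℓ => (hC ℓ).imp (fun u h => h.1)
  choose c0 hc0 using hCne
  set c1 := Function.update c0 idx u with hc1
  set c2 := Function.update c0 idx v with hc2
  have hc1mem : ∀ ℓ, c1 ℓ ∈ C ℓ := by
    intro ℓ
    rcases eq_or_ne ℓ idx with h | h
    · subst h; simpa [hc1] using hu
    · simpa [hc1, Function.update_of_ne h] using hc0 ℓ
  have hc2mem : ∀ ℓ, c2 ℓ ∈ C ℓ := by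
    intro ℓ
    rcases eq_or_ne ℓ idx with h | h
    · subst h; simpa [hc2] using hv
    · simpa [hc2, Function.update_of_ne h] using hc0 ℓ
  -- the difference vector
  have hxeq : ∀ k : ZMod (n * N),
      (mpVec n N M A c1 - mpVec n N M A c2) k =
        (u - v) ((k.val % n : ℕ) : ZMod n) *
          A idx ⟨k.val / n, Nat.div_lt_of_lt_mul (ZMod.val_lt k)⟩ := by
    intro k
    rw [Pi.sub_apply]
    unfold mpVec
    rw [← Finset.sum_sub_distrib]
    rw [Fintype.sum_eq_single idx]
    · simp [hc1, hc2, sub_mul]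
    · intro ℓ hℓ
      simp [hc1, hc2, Function.update_of_ne hℓ]
  have hxkey : ∀ k : ZMod (n * N), (mpVec n N M A c1 - mpVec n N M A c2) k ≠ 0 →
      (u - v) ((k.val : ℕ) : ZMod n) ≠ 0 ∧ s * n ≤ k.val := by
    intro k hk
    rw [hxeq] at hk
    have h1 := left_ne_zero_of_mul hk
    have h2 := right_ne_zero_of_mul hk
    constructor
    · rwa [ZMod.natCast_mod] at h1
    · by_contra hle
      push_neg at hle
      exact h2 (htri idx _ ((Nat.div_lt_iff_lt_mul hn).2 hle))
    -- s*n ≤ k.val ↔ s ≤ k.val / n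
  -- the two codewords differ
  obtain ⟨r, hr⟩ : ∃ r, (u - v) r ≠ 0 := by
    by_contra h
    push_neg at h
    exact huv (sub_eq_zero.1 (funext h))
  have hk0lt : s * n + r.val < n * N := by
    have h1 : r.val < n := ZMod.val_lt r
    have h2 : s + 1 ≤ N := hsN
    calc s * n + r.val < (s + 1) * n := by rw [add_one_mul]; omega
      _ ≤ N * n := Nat.mul_le_mul_right n h2
      _ = n * N := mul_comm N n
  set k0 : ZMod (n * N) := ((s * n + r.val : ℕ) : ZMod (n * N)) with hk0
  have hk0val : k0.val = s * n + r.val := by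
    rw [hk0, ZMod.val_natCast, Nat.mod_eq_of_lt hk0lt]
  have hmod : k0.val % n = r.val := by
    rw [hk0val, mul_comm s n, Nat.mul_add_mod, Nat.mod_eq_of_lt (ZMod.val_lt r)]
  have hdiv : k0.val / n = s := by
    rw [hk0val, mul_comm s n, Nat.mul_add_div hn, Nat.div_eq_of_lt (ZMod.val_lt r), add_zero]
  have hx0 : (mpVec n N M A c1 - mpVec n N M A c2) k0 ≠ 0 := by
    rw [hxeq]
    have hfin : (⟨k0.val / n, Nat.div_lt_of_lt_mul (ZMod.val_lt k0)⟩ : Fin N) = jdx :=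
      Fin.ext hdiv
    rw [hfin, hmod]
    have : ((r.val : ℕ) : ZMod n) = r := by
      simp [ZMod.natCast_val, ZMod.cast_id]
    rw [this]
    exact mul_ne_zero hr hAne
  have hvne : mpVec n N M A c1 ≠ mpVec n N M A c2 := by
    intro h
    apply hx0
    rw [h, sub_self]
    rfl
  -- conclude
  have hwit : bwt (n * N) b (mpVec n N M A c1 - mpVec n N M A c2) ∈
      {w | ∃ x ∈ mpCode n N M A C, ∃ y ∈ mpCode n N M A C, x ≠ y ∧ bwt (n * N) b (x - y) = w} :=
    ⟨mpVec n N M A c1, ⟨c1, hc1mem, rfl⟩, mpVec n N M A c2, ⟨c2, hc2mem, rfl⟩, hvne, rfl⟩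
  calc bDist (n * N) b (mpCode n N M A C) ≤
      bwt (n * N) b (mpVec n N M A c1 - mpVec n N M A c2) := Nat.sInf_le hwit
    _ ≤ (N - s) * bwt n b (u - v) + min (b - 1) (s * n) :=
      key hb1 hbn s hsN (u - v) _ hxkey
    _ = (N - idx.val) * bDist n b (C idx) + min (b - 1) (idx.val * n) := by rw [hwd]; rfl

/-- for an upper triangular NSC matrix `A`,
`d_b(C) ≤ min{N·d_b(C_1), (N-i+1)·d_b(C_i) + b - 1 (i = 2,…,M)}`
(0-based: `C_1 = C 0`, and `(N - i + 1)` becomes `N - i.val`). -/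
theorem stmt9 {F : Type*} [Field F] {n N M b : ℕ} [NeZero n] [NeZero N] [NeZero M]
    (hMN : M ≤ N) (hb1 : 1 ≤ b) (hbn : b ≤ n)
    (A : Matrix (Fin M) (Fin N) F) (hA : NSC A)
    (htri : ∀ (i : Fin M) (j : Fin N), j.val < i.val → A i j = 0)
    (C : Fin M → Set (ZMod n → F)) (hC : ∀ ℓ, ∃ u ∈ C ℓ, ∃ v ∈ C ℓ, u ≠ v) :
    bDist (n * N) b (mpCode n N M A C) ≤ N * bDist n b (C 0) ∧
    ∀ i : Fin M, 0 < i.val →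
      bDist (n * N) b (mpCode n N M A C) ≤ (N - i.val) * bDist n b (C i) + b - 1 := by
  constructor
  · have h := main_aux hMN hb1 hbn A hA htri C hC 0
    simpa using h
  · intro i hi
    have h := main_aux hMN hb1 hbn A hA htri C hC i
    have hmin : min (b - 1) (i.val * n) ≤ b - 1 := min_le_left _ _
    omega
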